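/- Let P be n points in ℝ^d, let C_1,...,C_k be a partition of P into clusters with centers chosen so that the optimal balanced k-center radius is r_opt (each C_j is contained in a ball of radius r_opt and L ≤ |C_j| ≤ U). Let s_1,...,s_k be the points selected by Gonzalez's farthest-point algorithm. Then there exists a k-tuple (s'_1,...,s'_k) ∈ {s_1,...,s_k}^k such that for each j, every point q ∈ C_j satisfies ‖q - s'_j‖ ≤ 4·r_opt. Hence assigning cluster C_j the center s'_j yields a balanced clustering with maximum radius at most 4·r_opt. -/
import Mathlib


/-- given an optimal balanced k-center solution of radius `r_opt` and the
points `s 0, …, s (k-1)` produced by Gonzalez's farthest-point algorithm, some k-tuple of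
points of `{s 0, …, s (k-1)}` serves as centers so that every point of each optimal
cluster `C j` is within distance `4 * r_opt` of the center assigned to `C j`. -/
theorem stmt4 {d k : ℕ} (hk : 0 < k) (P : Finset (EuclideanSpace ℝ (Fin d)))
    (L U : ℕ) (hL : 0 < L) (hLU : L ≤ U)
    (C : Fin k → Finset (EuclideanSpace ℝ (Fin d)))
    (cc : Fin k → EuclideanSpace ℝ (Fin d)) (ropt : ℝ) (hropt : 0 ≤ ropt)
    (hsub : ∀ j, C j ⊆ P)
    (hdisj : ∀ i j, i ≠ j → Disjoint (C i) (C j))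
    (hcoverP : ∀ p ∈ P, ∃ j, p ∈ C j)
    (hsize : ∀ j, L ≤ (C j).card ∧ (C j).card ≤ U)
    (hball : ∀ j, ∀ q ∈ C j, dist q (cc j) ≤ ropt)
    (s : Fin k → EuclideanSpace ℝ (Fin d)) (hsP : ∀ j, s j ∈ P)
    (hGon : ∀ j : Fin k, ∀ p ∈ P, ∀ l, l < j →
      ∃ l', l' < j ∧ dist p (s l') ≤ dist (s j) (s l)) :
    ∃ s' : Fin k → EuclideanSpace ℝ (Fin d),
      (∀ j, ∃ i, s' j = s i) ∧
      ∀ j, ∀ q ∈ C j, dist q (s' j) ≤ 4 * ropt := by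
  have hCP : ∀ j, ∀ q ∈ C j, ∀ q' ∈ C j, dist q q' ≤ 2 * ropt := by
    intro j q hq q' hq'
    calc dist q q' ≤ dist q (cc j) + dist (cc j) q' := dist_triangle _ _ _
    _ ≤ ropt + ropt := add_le_add (hball j q hq)
        (by rw [dist_comm]; exact hball j q' hq')
    _ = 2 * ropt := by ring
  choose f hfmem using fun i : Fin k => hcoverP (s i) (hsP i)
  by_cases hinj : Function.Injective f
  · choose g hg using (Finite.injective_iff_bijective.mp hinj).surjective
    refine ⟨fun j => s (g j), fun j => ⟨g j, rfl⟩, ?_⟩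
    intro j q hq
    have hmem : s (g j) ∈ C j := by have h := hfmem (g j); rwa [hg j] at h
    have := hCP j q hq _ hmem
    linarith
  · rw [Function.not_injective_iff] at hinj
    obtain ⟨a, b, hab, hne⟩ := hinj
    obtain ⟨i₁, i₂, hlt, heq⟩ : ∃ i₁ i₂ : Fin k, i₁ < i₂ ∧ f i₁ = f i₂ := by
      rcases lt_or_gt_of_ne hne with h | h
      · exact ⟨a, b, h, hab⟩
      · exact ⟨b, a, h, hab.symm⟩
    have hdist : dist (s i₂) (s i₁) ≤ 2 * ropt :=
      hCP (f i₁) _ (heq ▸ hfmem i₂) _ (hfmem i₁)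
    have key : ∀ p ∈ P, ∃ i, dist p (s i) ≤ 2 * ropt := by
      intro p hp
      obtain ⟨l', _, hle⟩ := hGon i₂ p hp i₁ hlt
      exact ⟨l', hle.trans hdist⟩
    have hne' : ∀ j, ∃ q0, q0 ∈ C j := fun j =>
      Finset.card_pos.mp (lt_of_lt_of_le hL (hsize j).1)
    choose q0 hq0 using hne'
    choose i hi using fun j => key (q0 j) (hsub j (hq0 j))
    refine ⟨fun j => s (i j), fun j => ⟨i j, rfl⟩, ?_⟩
    intro j q hq
    calc dist q (s (i j)) ≤ dist q (q0 j) + dist (q0 j) (s (i j)) := dist_triangle _ _ _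
    _ ≤ 2 * ropt + 2 * ropt := add_le_add (hCP j q hq _ (hq0 j)) (hi j)
    _ = 4 * ropt := by ring
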